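/- If G is a clique-friendly k-uniform hypergraph, X ⊆ V(G) with |X| < k-1, and K is a clique in the link lk_G(X), then K ∪ X is a clique of G. -/

import Mathlib

open Finset

/-- Number of edges of the hypergraph `E` contained in the vertex set `S`. -/
def edgesIn {V : Type*} [DecidableEq V] (E : Finset V → Prop) [DecidablePred E]
    (S : Finset V) : ℕ :=
  (S.powerset.filter E).card

/-- A `k`-uniform hypergraph is clique friendly if every set of `k+1` vertices
contains either `k+1` edges or at most two edges. -/
def CliqueFriendly {V : Type*} [DecidableEq V] (k : ℕ) (E : Finset V → Prop)
    [DecidablePred E] : Prop :=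
  ∀ S : Finset V, S.card = k + 1 → edgesIn E S = k + 1 ∨ edgesIn E S ≤ 2

/-- `K` is a clique of the `j`-uniform hypergraph `E`: every `j`-subset of `K` is an edge. -/
def IsHyperClique {V : Type*} (j : ℕ) (E : Finset V → Prop) (K : Finset V) : Prop :=
  ∀ S ⊆ K, S.card = j → E S

lemma all_edges_of_full {V : Type*} [DecidableEq V] {k : ℕ} {E : Finset V → Prop}
    [DecidablePred E] (huni : ∀ e, E e → e.card = k) {T : Finset V} (hT : T.card = k + 1)
    (hcnt : edgesIn E T = k + 1) : ∀ S ⊆ T, S.card = k → E S := by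
  have hsub : T.powerset.filter E ⊆ T.powerset.filter (fun s => s.card = k) := by
    intro s hs
    simp only [mem_filter, mem_powerset] at *
    exact ⟨hs.1, huni s hs.2⟩
  have hcard : (T.powerset.filter (fun s => s.card = k)).card = k + 1 := by
    rw [← powersetCard_eq_filter, card_powersetCard, hT, Nat.choose_succ_self_right]
  have heq : T.powerset.filter (fun s => s.card = k) ⊆ T.powerset.filter E := by
    rw [(eq_of_subset_of_card_le hsub (by rw [hcard]; exact le_of_eq hcnt.symm))]
  intro S hS hSc
  have hmem : S ∈ T.powerset.filter (fun s => s.card = k) := by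
    simp only [mem_filter, mem_powerset]; exact ⟨hS, hSc⟩
  exact (mem_filter.mp (heq hmem)).2

/-- If `G` is a clique-friendly `k`-uniform hypergraph, `X ⊆ V(G)` with `|X| < k-1`,
and `K` is a clique in the link of `X`, then `K ∪ X` is a clique of `G`. -/
theorem stmt1 {V : Type*} [Fintype V] [DecidableEq V] (k : ℕ)
    (E : Finset V → Prop) [DecidablePred E]
    (huni : ∀ e, E e → e.card = k)
    (hcf : CliqueFriendly k E)
    (X K : Finset V) (hX : X.card < k - 1) (hdisj : Disjoint K X)
    (hK : ∀ Y ⊆ K, Y.card = k - X.card → E (X ∪ Y)) :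
    IsHyperClique k E (K ∪ X) := by
  suffices h : ∀ n, ∀ S : Finset V, S ⊆ K ∪ X → S.card = k → (X \ S).card ≤ n → E S by
    intro S hS hc; exact h (X \ S).card S hS hc le_rfl
  intro n
  induction n with
  | zero =>
    intro S hS hc hn
    have hXS : X ⊆ S := by
      rw [← sdiff_eq_empty_iff_subset]
      exact card_eq_zero.mp (Nat.le_zero.mp hn)
    have hY : S \ X ⊆ K := by
      intro v hv
      simp only [mem_sdiff] at hv
      rcases mem_union.mp (hS hv.1) with h | h
      · exact h
      · exact absurd h hv.2
    have hYc : (S \ X).card = k - X.card := by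
      rw [card_sdiff, inter_eq_left.mpr hXS, hc]
    have := hK (S \ X) hY hYc
    rwa [union_sdiff_of_subset hXS] at this
  | succ n ih =>
    intro S hS hc hn
    by_cases hle : (X \ S).card ≤ n
    · exact ih S hS hc hle
    have hcard : (X \ S).card = n + 1 := le_antisymm hn (by omega)
    obtain ⟨x, hx⟩ : (X \ S).Nonempty := card_pos.mp (by omega)
    have hxX : x ∈ X := (mem_sdiff.mp hx).1
    have hxS : x ∉ S := (mem_sdiff.mp hx).2
    set T := insert x S with hTdef
    have hTc : T.card = k + 1 := by rw [card_insert_of_notMem hxS, hc]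
    -- the set of missing vertices
    set A := S \ X with hAdef
    have hAc : 3 ≤ A.card := by
      have h1 : A.card + (S ∩ X).card = S.card := card_sdiff_add_card_inter S X
      have h2 : S ∩ X ⊆ X.erase x := by
        intro v hv
        simp only [mem_inter] at hv
        exact mem_erase.mpr ⟨fun h => hxS (h ▸ hv.1), hv.2⟩
      have h3 : (S ∩ X).card ≤ X.card - 1 := by
        have := card_le_card h2
        rwa [card_erase_of_mem hxX] at this
      have h4 : 1 ≤ X.card := card_pos.mpr ⟨x, hxX⟩
      omega
    -- each T.erase v for v ∈ A is an edge
    have hedge : ∀ v ∈ A, E (T.erase v) := by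
      intro v hv
      have hvS : v ∈ S := (mem_sdiff.mp hv).1
      have hvX : v ∉ X := (mem_sdiff.mp hv).2
      have hvx : v ≠ x := fun h => hxS (h ▸ hvS)
      have hTe : T.erase v = insert x (S.erase v) := by
        rw [hTdef, erase_insert_of_ne hvx.symm]
      rw [hTe]
      apply ih
      · intro z hz
        rcases mem_insert.mp hz with h | h
        · exact mem_union_right _ (h ▸ hxX)
        · exact hS (mem_of_mem_erase h)
      · rw [card_insert_of_notMem (fun h => hxS (mem_of_mem_erase h)),
          card_erase_of_mem hvS, hc]
        omega
      · have hsub : X \ insert x (S.erase v) ⊆ (X \ S).erase x := by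
          intro z hz
          simp only [mem_sdiff, mem_insert, mem_erase, not_or] at hz ⊢
          refine ⟨hz.2.1, hz.1, fun hzS => ?_⟩
          rcases hz.2.2 with h
          exact h ⟨fun hzv => hvX (hzv ▸ hz.1), hzS⟩
        have := card_le_card hsub
        rw [card_erase_of_mem hx, hcard] at this
        omega
    -- count edges in T
    have hge : 3 ≤ edgesIn E T := by
      refine le_trans hAc ?_
      apply card_le_card_of_injOn (fun v => T.erase v)
      · intro v hv
        simp only [mem_filter, mem_powerset]
        exact (mem_filter.mpr ⟨mem_powerset.mpr (erase_subset _ _), hedge v hv⟩ : T.erase v ∈ T.powerset.filter E)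
      · intro v hv w hw hvw
        by_contra hne
        have hvT : v ∈ T := mem_insert_of_mem (mem_sdiff.mp hv).1
        have : v ∈ T.erase w := mem_erase.mpr ⟨hne, hvT⟩
        have hvw' : T.erase v = T.erase w := hvw
        rw [← hvw'] at this
        exact notMem_erase v T this
    rcases hcf T hTc with hfull | hsmall
    · exact all_edges_of_full huni hTc hfull S (subset_insert x S) hc
    · omega
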